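/- Let B ∈ S^n be written in block form B = [[C, c],[cᵀ, γ]] with C ∈ S^{n-1}, c ∈ ℝ^{n-1}, γ ∈ ℝ. Assume that C is nonsingular and that there exists ũ ∈ ℝ^{n-1} with (ũ,1)ᵀ B (ũ,1) ≤ 0. Then the set-valued map z ↦ ff_-(z, B) = {u ∈ ℝ^{n-1} : (u,z)ᵀ B (u,z) ≤ 0} from [0,1] to subsets of ℝ^{n-1} is lower semicontinuous at z = 0, i.e., for every open set W ⊆ ℝ^{n-1} with W ∩ ff_-(0,B) ≠ ∅, there exists ε ∈ (0,1] such that W ∩ ff_-(z,B) ≠ ∅ for all z ∈ [0,ε). -/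

import Mathlib

open Matrix

/-- q(u,z,B) = (u,z)ᵀ B (u,z), where (u,z) is the vector obtained by appending z to u. -/
def qform {m : ℕ} (u : Fin m → ℝ) (z : ℝ) (B : Matrix (Fin (m + 1)) (Fin (m + 1)) ℝ) : ℝ :=
  (Fin.snoc u z : Fin (m + 1) → ℝ) ⬝ᵥ B.mulVec (Fin.snoc u z)

/-- ff_-(z,B) = {u ∈ ℝ^{n-1} : q(u,z,B) ≤ 0}. -/
def ffm {m : ℕ} (z : ℝ) (B : Matrix (Fin (m + 1)) (Fin (m + 1)) ℝ) : Set (Fin m → ℝ) :=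
  {u | qform u z B ≤ 0}

lemma snoc_coord_cont {m : ℕ} (u : Fin m → ℝ) (i : Fin (m + 1)) :
    Continuous fun z : ℝ => (Fin.snoc u z : Fin (m + 1) → ℝ) i := by
  induction i using Fin.lastCases with
  | last => simpa using continuous_id'
  | cast j => simpa using continuous_const

lemma qform_cont {m : ℕ} (u : Fin m → ℝ) (B : Matrix (Fin (m + 1)) (Fin (m + 1)) ℝ) :
    Continuous fun z : ℝ => qform u z B := by
  unfold qform dotProduct Matrix.mulVec
  refine continuous_finset_sum _ fun i _ => ?_
  exact (snoc_coord_cont u i).mul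
    (continuous_finset_sum _ fun j _ => (continuous_const.mul (snoc_coord_cont u j)))

lemma snoc_smul {m : ℕ} (u : Fin m → ℝ) (z : ℝ) :
    (Fin.snoc (z • u) z : Fin (m + 1) → ℝ) = z • (Fin.snoc u 1 : Fin (m + 1) → ℝ) := by
  funext i
  induction i using Fin.lastCases with
  | last => simp
  | cast j => simp

lemma qform_smul {m : ℕ} (u : Fin m → ℝ) (z : ℝ) (B : Matrix (Fin (m + 1)) (Fin (m + 1)) ℝ) :
    qform (z • u) z B = z ^ 2 * qform u 1 B := by
  unfold qform
  rw [snoc_smul, Matrix.mulVec_smul, dotProduct_smul, smul_dotProduct]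
  simp; ring

lemma qform_zero {m : ℕ} (u : Fin m → ℝ) (B : Matrix (Fin (m + 1)) (Fin (m + 1)) ℝ) :
    qform u 0 B = u ⬝ᵥ (B.submatrix Fin.castSucc Fin.castSucc).mulVec u := by
  unfold qform dotProduct Matrix.mulVec
  rw [Fin.sum_univ_castSucc]
  simp [Fin.sum_univ_castSucc, dotProduct, Matrix.mulVec]

lemma dot_symm {m : ℕ} (C : Matrix (Fin m) (Fin m) ℝ) (hCs : Cᵀ = C) (u w : Fin m → ℝ) :
    u ⬝ᵥ C.mulVec w = w ⬝ᵥ C.mulVec u := by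
  rw [Matrix.dotProduct_mulVec, ← hCs, Matrix.vecMul_transpose, dotProduct_comm, hCs]

lemma pert_id {m : ℕ} (C : Matrix (Fin m) (Fin m) ℝ) (hCs : Cᵀ = C) (u v : Fin m → ℝ)
    (h0 : u ⬝ᵥ C.mulVec u = 0) (t : ℝ) :
    (u - t • v) ⬝ᵥ C.mulVec (u - t • v)
      = t * (t * (v ⬝ᵥ C.mulVec v) - 2 * (v ⬝ᵥ C.mulVec u)) := by
  rw [Matrix.mulVec_sub, Matrix.mulVec_smul, sub_dotProduct, smul_dotProduct,
    dotProduct_sub, dotProduct_sub, dotProduct_smul, dotProduct_smul,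
    dot_symm C hCs u v, h0]
  simp; ring

lemma caseA {m : ℕ} (B : Matrix (Fin (m + 1)) (Fin (m + 1)) ℝ) (W : Set (Fin m → ℝ))
    (u₁ : Fin m → ℝ) (h1 : u₁ ∈ W) (h2 : qform u₁ 0 B < 0) :
    ∃ ε : ℝ, 0 < ε ∧ ε ≤ 1 ∧ ∀ z : ℝ, 0 ≤ z → z < ε → (W ∩ ffm z B).Nonempty := by
  have hop : IsOpen {z : ℝ | qform u₁ z B < 0} := isOpen_lt (qform_cont u₁ B) continuous_const
  obtain ⟨ε, hε, hball⟩ := Metric.isOpen_iff.mp hop 0 h2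
  refine ⟨min ε 1, lt_min hε one_pos, min_le_right _ _, fun z hz0 hz => ?_⟩
  refine ⟨u₁, h1, ?_⟩
  show qform u₁ z B ≤ 0
  refine le_of_lt (hball ?_)
  simp only [Metric.mem_ball, Real.dist_eq, sub_zero, abs_of_nonneg hz0]
  exact lt_of_lt_of_le hz (min_le_left _ _)

theorem stmt14 {m : ℕ} (B : Matrix (Fin (m + 1)) (Fin (m + 1)) ℝ) (hB : B.IsSymm)
    (hC : IsUnit (B.submatrix (Fin.castSucc) (Fin.castSucc)).det)
    (hex : ∃ u : Fin m → ℝ, qform u 1 B ≤ 0) :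
    ∀ W : Set (Fin m → ℝ), IsOpen W → (W ∩ ffm 0 B).Nonempty →
      ∃ ε : ℝ, 0 < ε ∧ ε ≤ 1 ∧ ∀ z : ℝ, 0 ≤ z → z < ε → (W ∩ ffm z B).Nonempty := by
  rintro W hW ⟨u₀, hu₀W, hu₀⟩
  by_cases hq : qform u₀ 0 B < 0
  · exact caseA B W u₀ hu₀W hq
  have hq0 : qform u₀ 0 B = 0 := le_antisymm hu₀ (not_lt.mp hq)
  by_cases hu0 : u₀ = 0
  · -- zero case: use z • ũ
    obtain ⟨ut, hut⟩ := hex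
    have hop : IsOpen {z : ℝ | z • ut ∈ W} := hW.preimage (continuous_id.smul continuous_const)
    have h0mem : (0 : ℝ) ∈ {z : ℝ | z • ut ∈ W} := by
      simp only [Set.mem_setOf_eq, zero_smul]
      rw [hu0] at hu₀W; exact hu₀W
    obtain ⟨ε, hε, hball⟩ := Metric.isOpen_iff.mp hop 0 h0mem
    refine ⟨min ε 1, lt_min hε one_pos, min_le_right _ _, fun z hz0 hz => ?_⟩
    refine ⟨z • ut, hball ?_, ?_⟩
    · simp only [Metric.mem_ball, Real.dist_eq, sub_zero, abs_of_nonneg hz0]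
      exact lt_of_lt_of_le hz (min_le_left _ _)
    · show qform (z • ut) z B ≤ 0
      rw [qform_smul]
      exact mul_nonpos_of_nonneg_of_nonpos (sq_nonneg z) hut
  · -- perturbation case
    set C := B.submatrix (Fin.castSucc) (Fin.castSucc) with hCdef
    have hCs : Cᵀ = C := by
      funext i j
      exact hB.apply _ _
    set v := C.mulVec u₀ with hvdef
    have hinj : Function.Injective C.mulVec := Matrix.mulVec_injective_iff_isUnit.mpr ((Matrix.isUnit_iff_isUnit_det C).mpr hC)
    have hv : v ≠ 0 := by
      intro h
      apply hu0
      apply hinj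
      rw [← hvdef, h, Matrix.mulVec_zero]
    have hvv : 0 < v ⬝ᵥ v := by
      rcases lt_or_eq_of_le (Finset.sum_nonneg fun i _ => mul_self_nonneg (v i) :
          (0:ℝ) ≤ v ⬝ᵥ v) with h | h
      · exact h
      · exact absurd (dotProduct_self_eq_zero.mp h.symm) hv
    have hq0' : u₀ ⬝ᵥ C.mulVec u₀ = 0 := by rw [← qform_zero]; exact hq0
    set a := v ⬝ᵥ C.mulVec v with hadef
    have hW' : ∀ᶠ t in nhdsWithin (0:ℝ) (Set.Ioi 0), u₀ - t • v ∈ W := by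
      have hc : Filter.Tendsto (fun t : ℝ => u₀ - t • v) (nhdsWithin 0 (Set.Ioi 0)) (nhds u₀) := by
        have := (continuous_const.sub (continuous_id.smul continuous_const) :
          Continuous fun t : ℝ => u₀ - t • v).tendsto' 0 u₀ (by simp)
        exact this.mono_left nhdsWithin_le_nhds
      exact hc.eventually (hW.mem_nhds hu₀W)
    have ha : ∀ᶠ t in nhdsWithin (0:ℝ) (Set.Ioi 0), t * a < 2 * (v ⬝ᵥ v) := by
      have hc : Filter.Tendsto (fun t : ℝ => t * a) (nhdsWithin (0:ℝ) (Set.Ioi 0)) (nhds 0) := by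
        have := (continuous_id.mul continuous_const : Continuous fun t : ℝ => t * a).tendsto' 0 0 (by simp)
        exact this.mono_left nhdsWithin_le_nhds
      exact hc.eventually_lt_const (by positivity)
    have hpos : ∀ᶠ t in nhdsWithin (0:ℝ) (Set.Ioi 0), 0 < t :=
      eventually_mem_nhdsWithin
    obtain ⟨t, ⟨htW, hta⟩, ht0⟩ := ((hW'.and ha).and hpos).exists
    apply caseA B W (u₀ - t • v) htW
    rw [qform_zero, ← hCdef, pert_id C hCs u₀ v hq0' t, ← hvdef, ← hadef]
    exact mul_neg_of_pos_of_neg ht0 (sub_neg.mpr hta)
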